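/- Let a, b ∈ {1, 3} ⊆ ℤ/4ℤ and R = R_{a+bw}, and let n ≥ 1. For every vector c = (c₁, …, c_n) ∈ Rⁿ with Σ_{i=1}^{n} cᵢ² = 0, one has 2·Σ_{i=1}^{n} cᵢ = 0 in R; i.e., the all-2 vector (2, 2, …, 2) is orthogonal (with respect to the Euclidean form Σᵢ xᵢyᵢ) to every self-orthogonal vector of Rⁿ. -/

import Mathlib

open Polynomial

/-- The base ring ℤ/4ℤ. -/
abbrev Z4 := ZMod 4

/-- The polynomial X² − (a + bX) over ℤ/4ℤ. -/
noncomputable def wPoly (a b : Z4) : Z4[X] := X ^ 2 - (C b * X + C a)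

/-- The ring R_{a+bw} = (ℤ/4ℤ)[X]/(X² − (a + bX)); every element is uniquely
x₀ + x₁·w with x₀, x₁ ∈ ℤ/4ℤ, and w² = a + b·w. -/
abbrev Rw (a b : Z4) : Type := AdjoinRoot (wPoly a b)

/-- The element w of R_{a+bw}. -/
noncomputable def ww (a b : Z4) : Rw a b := AdjoinRoot.root _

instance : Fact (1 < 4) := ⟨by norm_num⟩

lemma degree_lin_le (a b : Z4) : (C b * X + C a : Z4[X]).degree ≤ 1 := by
  apply le_trans (Polynomial.degree_add_le _ _)
  simp only [sup_le_iff]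
  refine ⟨?_, le_trans Polynomial.degree_C_le (by norm_num)⟩
  calc (C b * X : Z4[X]).degree ≤ (C b : Z4[X]).degree + (X : Z4[X]).degree :=
        Polynomial.degree_mul_le _ _
    _ ≤ 0 + 1 := add_le_add Polynomial.degree_C_le Polynomial.degree_X_le
    _ = 1 := by norm_num

lemma wPoly_monic (a b : Z4) : (wPoly a b).Monic :=
  Polynomial.monic_X_pow_sub
    (lt_of_le_of_lt (degree_lin_le a b) (by norm_num : (1 : WithBot ℕ) < 2))

lemma wPoly_degree (a b : Z4) : (wPoly a b).degree = 2 := by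
  unfold wPoly
  rw [Polynomial.degree_sub_eq_left_of_degree_lt]
  · rw [Polynomial.degree_X_pow]; rfl
  · rw [Polynomial.degree_X_pow]
    exact lt_of_le_of_lt (degree_lin_le a b) (by exact_mod_cast one_lt_two)

lemma ww_sq (a b : Z4) :
    (ww a b) ^ 2 = algebraMap Z4 (Rw a b) a + algebraMap Z4 (Rw a b) b * ww a b := by
  have h2 : AdjoinRoot.mk (wPoly a b) (X ^ 2 - (C b * X + C a)) = 0 := AdjoinRoot.mk_self
  rw [map_sub, map_add, map_mul, AdjoinRoot.mk_C, AdjoinRoot.mk_C, map_pow,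
    AdjoinRoot.mk_X, sub_eq_zero] at h2
  rw [ww, h2, AdjoinRoot.algebraMap_eq]
  ring

/-- Every element of Rw is p + q·w. -/
lemma Rw_repr (a b : Z4) (x : Rw a b) :
    ∃ p q : Z4, x = algebraMap Z4 (Rw a b) p + algebraMap Z4 (Rw a b) q * ww a b := by
  obtain ⟨f, rfl⟩ := AdjoinRoot.mk_surjective x
  set r := f %ₘ wPoly a b with hr
  have hdeg : r.degree < (wPoly a b).degree := Polynomial.degree_modByMonic_lt f (wPoly_monic a b)
  rw [wPoly_degree] at hdeg
  have hdeg1 : r.degree ≤ 1 := by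
    have := Nat.WithBot.add_one_le_of_lt hdeg
    rwa [show (2 : WithBot ℕ) = 1 + 1 from rfl, WithBot.add_le_add_iff_right (by simp)] at this
  refine ⟨r.coeff 0, r.coeff 1, ?_⟩
  have hmk : AdjoinRoot.mk (wPoly a b) f = AdjoinRoot.mk (wPoly a b) r := by
    conv_lhs => rw [← Polynomial.modByMonic_add_div f (wPoly a b)]
    rw [map_add, map_mul, AdjoinRoot.mk_self, zero_mul, add_zero]
  rw [hmk]
  conv_lhs => rw [Polynomial.eq_X_add_C_of_degree_le_one hdeg1]
  rw [map_add, map_mul, AdjoinRoot.mk_C, AdjoinRoot.mk_C, AdjoinRoot.mk_X,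
    AdjoinRoot.algebraMap_eq, ww]
  ring

/-- Uniqueness: p + q·w = 0 → p = q = 0. -/
lemma Rw_indep (a b : Z4) (p q : Z4)
    (h : algebraMap Z4 (Rw a b) p + algebraMap Z4 (Rw a b) q * ww a b = 0) :
    p = 0 ∧ q = 0 := by
  have h0 : AdjoinRoot.mk (wPoly a b) (C p + C q * X) = 0 := by
    rw [map_add, map_mul, AdjoinRoot.mk_C, AdjoinRoot.mk_C, AdjoinRoot.mk_X]
    rw [AdjoinRoot.algebraMap_eq, ww] at h
    exact h
  rw [AdjoinRoot.mk_eq_zero] at h0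
  have hlt : (C p + C q * X : Z4[X]).degree < (wPoly a b).degree := by
    rw [wPoly_degree]
    refine lt_of_le_of_lt ?_ (by norm_num : (1 : WithBot ℕ) < 2)
    calc (C p + C q * X : Z4[X]).degree = (C q * X + C p : Z4[X]).degree := by ring_nf
      _ ≤ 1 := degree_lin_le p q
  have hz : (C p + C q * X : Z4[X]) = 0 := by
    have hmod := (Polynomial.modByMonic_eq_zero_iff_dvd (wPoly_monic a b)).2 h0
    rwa [(Polynomial.modByMonic_eq_self_iff (wPoly_monic a b)).2 hlt] at hmod
  constructor
  · have := congrArg (fun f => Polynomial.coeff f 0) hz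
    simpa using this
  · have := congrArg (fun f => Polynomial.coeff f 1) hz
    simpa using this

/-- for a, b ∈ {1,3} ⊆ ℤ/4ℤ, every self-orthogonal vector c ∈ Rⁿ
(i.e. Σᵢ cᵢ² = 0) satisfies 2·Σᵢ cᵢ = 0, i.e. the all-2 vector is orthogonal to it. -/
theorem all_two_orthogonal_to_self_orthogonal (a b : Z4) (ha : a = 1 ∨ a = 3)
    (hb : b = 1 ∨ b = 3) (n : ℕ) (hn : 1 ≤ n) (c : Fin n → Rw a b)
    (hc : ∑ i, c i ^ 2 = 0) :
    2 * ∑ i, c i = 0 := by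
  classical
  choose p q hpq using fun i => Rw_repr a b (c i)
  set A := algebraMap Z4 (Rw a b) with hA
  have hw := ww_sq a b
  have hsq : ∀ i, c i ^ 2
      = A (p i ^ 2 + a * q i ^ 2) + A (2 * p i * q i + b * q i ^ 2) * ww a b := by
    intro i
    have expand : (A (p i) + A (q i) * ww a b) ^ 2
        = A (p i) ^ 2 + A (q i) ^ 2 * (ww a b ^ 2) + 2 * A (p i) * A (q i) * ww a b := by ring
    rw [hpq i, expand, hw]
    simp only [map_add, map_mul, map_pow, map_ofNat]
    ring
  have hsum : ∑ i, c i ^ 2 =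
      A (∑ i, (p i ^ 2 + a * q i ^ 2)) + A (∑ i, (2 * p i * q i + b * q i ^ 2)) * ww a b := by
    rw [map_sum, map_sum, Finset.sum_mul, ← Finset.sum_add_distrib]
    exact Finset.sum_congr rfl fun i _ => hsq i
  rw [hsum] at hc
  obtain ⟨h1, h2⟩ := Rw_indep a b _ _ hc
  have key1 : ∀ x y : Z4, 2 * (x ^ 2 + a * y ^ 2) = 2 * x + 2 * y := by
    rcases ha with rfl | rfl <;> decide
  have key2 : ∀ x y : Z4, 2 * (2 * x * y + b * y ^ 2) = 2 * y := by
    rcases hb with rfl | rfl <;> decide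
  have hq2 : 2 * ∑ i, q i = 0 := by
    calc 2 * ∑ i, q i = ∑ i, 2 * q i := Finset.mul_sum _ _ _
      _ = ∑ i, 2 * (2 * p i * q i + b * q i ^ 2) :=
          Finset.sum_congr rfl fun i _ => (key2 (p i) (q i)).symm
      _ = 2 * ∑ i, (2 * p i * q i + b * q i ^ 2) := (Finset.mul_sum _ _ _).symm
      _ = 0 := by rw [h2, mul_zero]
  have hp2 : 2 * ∑ i, p i = 0 := by
    have hsum2 : ∑ i, (2 * p i + 2 * q i) = 0 := by
      calc ∑ i, (2 * p i + 2 * q i) = ∑ i, 2 * (p i ^ 2 + a * q i ^ 2) :=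
            Finset.sum_congr rfl fun i _ => (key1 (p i) (q i)).symm
        _ = 2 * ∑ i, (p i ^ 2 + a * q i ^ 2) := (Finset.mul_sum _ _ _).symm
        _ = 0 := by rw [h1, mul_zero]
    rw [Finset.sum_add_distrib, ← Finset.mul_sum, ← Finset.mul_sum, hq2, add_zero] at hsum2
    exact hsum2
  have hS : ∑ i, c i = A (∑ i, p i) + A (∑ i, q i) * ww a b := by
    rw [map_sum, map_sum, Finset.sum_mul, ← Finset.sum_add_distrib]
    exact Finset.sum_congr rfl fun i _ => hpq i
  rw [hS, mul_add, ← mul_assoc, show (2 : Rw a b) = A 2 from (map_ofNat A 2).symm,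
    ← map_mul, ← map_mul, hp2, hq2, map_zero, zero_mul, add_zero]
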